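/- Let Ω be a countably infinite set and let u, f ∈ Ω^Ω. If u is injective, c(f) < ∞, and d(u) = d(f) = ∞, then f belongs to the subsemigroup of Ω^Ω generated by S_{1,2,3,4,5} ∪ {u}. -/

import Mathlib

/-!
Setting: `Ω` is a countably infinite set, `Function.End Ω = Ω → Ω` is the full
transformation semigroup (a subset is closed under composition in one order iff
it is closed in the other, so the lattice of subsemigroups is unaffected by the
left-to-right convention of the paper).
-/

open Cardinal

/-- A transversal of `f`: a set on which `f` is injective and whose image is all of `Ωf`. -/
def IsTransversal {Ω : Type*} (f : Ω → Ω) (T : Set Ω) : Prop :=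
  Set.InjOn f T ∧ f '' T = Set.range f

/-- The defect `d(f) = |Ω \ Ωf|`. -/
noncomputable def defect {Ω : Type*} (f : Ω → Ω) : Cardinal :=
  #((Set.range f)ᶜ : Set Ω)

/-- The collapse `c(f) = |Ω \ Σ|` for a transversal `Σ` of `f` (the value is
independent of the choice of transversal, so the infimum is the common value). -/
noncomputable def collapse {Ω : Type*} (f : Ω → Ω) : Cardinal :=
  ⨅ T : {T : Set Ω // IsTransversal f T}, #(T.1ᶜ : Set Ω)

/-- The infinite contraction index `k(f) = |{α : αf⁻¹ infinite}|`. -/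
noncomputable def contract {Ω : Type*} (f : Ω → Ω) : Cardinal :=
  #({α : Ω | (f ⁻¹' {α}).Infinite} : Set Ω)

def S1 {Ω : Type*} : Set (Function.End Ω) := {f | collapse f = 0 ∨ 0 < defect f}
def S2 {Ω : Type*} : Set (Function.End Ω) := {f | 0 < collapse f ∨ defect f = 0}
def S3 {Ω : Type*} : Set (Function.End Ω) := {f | collapse f < ℵ₀ ∨ ℵ₀ ≤ defect f}
def S4 {Ω : Type*} : Set (Function.End Ω) := {f | ℵ₀ ≤ collapse f ∨ defect f < ℵ₀}
def S5 {Ω : Type*} : Set (Function.End Ω) := {f | contract f < ℵ₀}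

/-- `Sym(Ω)`, the bijections of `Ω`. -/
def SymOmega {Ω : Type*} : Set (Function.End Ω) := {f | Function.Bijective f}

/-- `U = {f : d(f) = ∞ or 0 < c(f) < ∞} ∪ Sym(Ω)`. -/
def SetU {Ω : Type*} : Set (Function.End Ω) :=
  {f | ℵ₀ ≤ defect f ∨ (0 < collapse f ∧ collapse f < ℵ₀)} ∪ SymOmega

/-- `V = {f : c(f) = ∞ or 0 < d(f) < ∞} ∪ Sym(Ω)`. -/
def SetV {Ω : Type*} : Set (Function.End Ω) :=
  {f | ℵ₀ ≤ collapse f ∨ (0 < defect f ∧ defect f < ℵ₀)} ∪ SymOmega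

/-- `S_{1,2,3,4,5}`. -/
def S12345 {Ω : Type*} : Set (Function.End Ω) := S1 ∩ S2 ∩ S3 ∩ S4 ∩ S5

/-- The family `S_1, …, S_5` indexed by `Fin 5`. -/
def SS {Ω : Type*} : Fin 5 → Set (Function.End Ω) := ![S1, S2, S3, S4, S5]

/- ===== auxiliary lemmas ===== -/

open Classical in
noncomputable def pickPre {Ω : Type*} (f : Ω → Ω) (a : Ω) : Ω :=
  if h : ∃ x, f x = a then h.choose else a

lemma pickPre_spec {Ω : Type*} {f : Ω → Ω} {a : Ω} (h : ∃ x, f x = a) :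
    f (pickPre f a) = a := by
  rw [pickPre, dif_pos h]; exact h.choose_spec

lemma exists_transversal {Ω : Type*} (f : Ω → Ω) : ∃ T : Set Ω, IsTransversal f T := by
  refine ⟨pickPre f '' Set.range f, ?_, ?_⟩
  · rintro x ⟨a, ⟨y, rfl⟩, rfl⟩ x' ⟨b, ⟨z, rfl⟩, rfl⟩ hxy
    rw [pickPre_spec (f := f) (a := f y) ⟨y, rfl⟩, pickPre_spec (f := f) (a := f z) ⟨z, rfl⟩] at hxy
    rw [hxy]
  · ext a
    constructor
    · rintro ⟨x, ⟨b, hb, rfl⟩, rfl⟩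
      rw [pickPre_spec hb]
      exact hb
    · rintro ⟨y, rfl⟩
      exact ⟨pickPre f (f y), ⟨f y, ⟨y, rfl⟩, rfl⟩, pickPre_spec ⟨y, rfl⟩⟩

instance transversal_nonempty {Ω : Type*} (f : Ω → Ω) :
    Nonempty {T : Set Ω // IsTransversal f T} :=
  (exists_transversal f).elim fun T hT => ⟨⟨T, hT⟩⟩

lemma le_collapse {Ω : Type*} {f : Ω → Ω} {a : Cardinal}
    (h : ∀ T : Set Ω, IsTransversal f T → a ≤ #(Tᶜ : Set Ω)) : a ≤ collapse f :=
  le_ciInf fun T => h T.1 T.2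

lemma fiber_finite {Ω : Type*} {f : Ω → Ω} (h : collapse f < ℵ₀) (α : Ω) :
    (f ⁻¹' {α}).Finite := by
  obtain ⟨⟨T, hT⟩, hlt⟩ := exists_lt_of_ciInf_lt h
  have hTc : (Tᶜ : Set Ω).Finite := Cardinal.lt_aleph0_iff_set_finite.mp hlt
  have hsub : f ⁻¹' {α} ⊆ (f ⁻¹' {α} ∩ T) ∪ Tᶜ := by
    intro x hx
    by_cases hxT : x ∈ T
    · exact Or.inl ⟨hx, hxT⟩
    · exact Or.inr hxT
  refine Set.Finite.subset (Set.Finite.union ?_ hTc) hsub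
  apply Set.Subsingleton.finite
  rintro x ⟨hx, hxT⟩ y ⟨hy, hyT⟩
  simp only [Set.mem_preimage, Set.mem_singleton_iff] at hx hy
  exact hT.1 hxT hyT (hx.trans hy.symm)

open Classical in
noncomputable def gaux {Ω : Type*} (u f : Ω → Ω)
    (cE : ℕ ≃ ((Set.range u)ᶜ : Set Ω)) (fE : ℕ ≃ ((Set.range f)ᶜ : Set Ω)) : Ω → Ω :=
  fun x =>
    if h : x ∈ Set.range u then f (Classical.choose h)
    else (fE (2 * ((cE.symm ⟨x, h⟩) / 2)) : Ω)

section GauxLemmas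

variable {Ω : Type*} {u f : Ω → Ω}
  (cE : ℕ ≃ ((Set.range u)ᶜ : Set Ω)) (fE : ℕ ≃ ((Set.range f)ᶜ : Set Ω))

lemma gaux_u (hu : Function.Injective u) (x : Ω) : gaux u f cE fE (u x) = f x := by
  have h : u x ∈ Set.range u := ⟨x, rfl⟩
  simp only [gaux, dif_pos h]
  exact congrArg f (hu (Classical.choose_spec h))

lemma gaux_nc {x : Ω} (h : x ∉ Set.range u) :
    gaux u f cE fE x = (fE (2 * ((cE.symm ⟨x, h⟩) / 2)) : Ω) := by
  simp only [gaux, dif_neg h]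

lemma gaux_c (m : ℕ) : gaux u f cE fE (cE m) = (fE (2 * (m / 2)) : Ω) := by
  have h : (cE m : Ω) ∉ Set.range u := (cE m).2
  rw [gaux_nc cE fE h]
  congr 2
  rw [Subtype.coe_eta, Equiv.symm_apply_apply]

end GauxLemmas

theorem stmt5 (Ω : Type) [Countable Ω] [Infinite Ω] (u f : Function.End Ω)
    (hu : Function.Injective u) (hcf : collapse f < ℵ₀)
    (hdu : ℵ₀ ≤ defect u) (hdf : ℵ₀ ≤ defect f) :
    f ∈ Subsemigroup.closure (S12345 ∪ {u}) := by
  classical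
  haveI hCinf : Infinite ((Set.range u)ᶜ : Set Ω) := Cardinal.aleph0_le_mk_iff.mp hdu
  haveI hFinf : Infinite ((Set.range f)ᶜ : Set Ω) := Cardinal.aleph0_le_mk_iff.mp hdf
  obtain ⟨cE⟩ : Nonempty (ℕ ≃ ((Set.range u)ᶜ : Set Ω)) := nonempty_equiv_of_countable
  obtain ⟨fE⟩ : Nonempty (ℕ ≃ ((Set.range f)ᶜ : Set Ω)) := nonempty_equiv_of_countable
  set g : Function.End Ω := gaux u f cE fE with hgdef
  -- defect of g is infinite
  have hdg : ℵ₀ ≤ defect g := by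
    have hinf : ((Set.range g)ᶜ : Set Ω).Infinite := by
      apply Set.infinite_of_injective_forall_mem
        (f := fun n : ℕ => (fE (2 * n + 1) : Ω))
      · intro n m hnm
        have := fE.injective (Subtype.coe_injective hnm)
        omega
      · intro n
        rintro ⟨x, hx⟩
        by_cases h : x ∈ Set.range u
        · obtain ⟨y, rfl⟩ := h
          rw [hgdef] at hx
          rw [gaux_u cE fE hu] at hx
          exact (fE (2 * n + 1)).2 ⟨y, hx⟩
        · rw [hgdef, gaux_nc cE fE h] at hx
          have := fE.injective (Subtype.coe_injective hx)
          omega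
    exact Cardinal.aleph0_le_mk_iff.mpr (Set.infinite_coe_iff.mpr hinf)
  -- collapse of g is infinite
  have hcg : ℵ₀ ≤ collapse g := by
    apply le_collapse
    intro T hT
    have key : ∀ n : ℕ, ¬((cE (2 * n) : Ω) ∈ T ∧ (cE (2 * n + 1) : Ω) ∈ T) := by
      rintro n ⟨h1, h2⟩
      have e1 : g (cE (2 * n)) = (fE (2 * n) : Ω) := by
        have h2n : 2 * ((2 * n) / 2) = 2 * n := by omega
        rw [hgdef]; exact (gaux_c cE fE (2 * n)).trans (by rw [h2n])
      have e2 : g (cE (2 * n + 1)) = (fE (2 * n) : Ω) := by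
        have h2n : 2 * ((2 * n + 1) / 2) = 2 * n := by omega
        rw [hgdef]; exact (gaux_c cE fE (2 * n + 1)).trans (by rw [h2n])
      have heq := hT.1 h1 h2 (e1.trans e2.symm)
      have := cE.injective (Subtype.coe_injective heq)
      omega
    set pick : ℕ → Ω := fun n =>
      if (cE (2 * n) : Ω) ∈ T then (cE (2 * n + 1) : Ω) else (cE (2 * n) : Ω) with hpick
    have hmem : ∀ n, pick n ∈ Tᶜ := by
      intro n
      simp only [hpick]
      split_ifs with h
      · exact fun h2 => key n ⟨h, h2⟩
      · exact h
    have hpi : Function.Injective pick := by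
      intro n m hnm
      rw [hpick] at hnm
      simp only at hnm
      split_ifs at hnm <;>
        · have := cE.injective (Subtype.coe_injective hnm); omega
    have hinf : (Tᶜ : Set Ω).Infinite := Set.infinite_of_injective_forall_mem hpi hmem
    exact Cardinal.aleph0_le_mk_iff.mpr (Set.infinite_coe_iff.mpr hinf)
  -- all fibers of g are finite
  have hfib : ∀ α : Ω, (g ⁻¹' {α}).Finite := by
    intro α
    have hmain : g ⁻¹' {α} ⊆ (u '' (f ⁻¹' {α})) ∪
        ((fun m : ℕ => (cE m : Ω)) '' {m | (fE (2 * (m / 2)) : Ω) = α}) := by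
      intro x hx
      replace hx : g x = α := hx
      by_cases h : x ∈ Set.range u
      · obtain ⟨y, rfl⟩ := h
        rw [hgdef, gaux_u cE fE hu] at hx
        exact Or.inl ⟨y, hx, rfl⟩
      · right
        refine ⟨cE.symm ⟨x, h⟩, ?_, ?_⟩
        · rw [hgdef, gaux_nc cE fE h] at hx
          exact hx
        · show ((cE (cE.symm ⟨x, h⟩)) : Ω) = x
          rw [Equiv.apply_symm_apply]
    refine Set.Finite.subset (Set.Finite.union ?_ ?_) hmain
    · exact (fiber_finite hcf α).image u
    · apply Set.Finite.image
      by_cases hne : {m : ℕ | (fE (2 * (m / 2)) : Ω) = α}.Nonempty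
      · obtain ⟨m₀, hm₀⟩ := hne
        apply Set.Finite.subset
          ((Set.finite_singleton (2 * (m₀ / 2) + 1)).insert (2 * (m₀ / 2)))
        intro m hm
        have heq : (fE (2 * (m / 2)) : Ω) = (fE (2 * (m₀ / 2)) : Ω) := hm.trans hm₀.symm
        have := fE.injective (Subtype.coe_injective heq)
        simp only [Set.mem_insert_iff, Set.mem_singleton_iff]
        omega
      · rw [Set.not_nonempty_iff_eq_empty] at hne
        rw [hne]
        exact Set.finite_empty
  -- contraction index of g is finite
  have hkg : contract g < ℵ₀ := by
    have hempty : {α : Ω | (g ⁻¹' {α}).Infinite} = ∅ := by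
      ext α
      simp only [Set.mem_setOf_eq, Set.mem_empty_iff_false, iff_false]
      exact fun hα => hα (hfib α)
    have : contract g = 0 := by
      unfold contract
      rw [hempty]
      simp
    rw [this]
    exact Cardinal.aleph0_pos
  -- g is in S12345
  have hg : g ∈ (S12345 : Set (Function.End Ω)) := by
    refine ⟨⟨⟨⟨?_, ?_⟩, ?_⟩, ?_⟩, ?_⟩
    · exact Or.inr (lt_of_lt_of_le Cardinal.aleph0_pos hdg)
    · exact Or.inl (lt_of_lt_of_le Cardinal.aleph0_pos hcg)
    · exact Or.inr hdg
    · exact Or.inl hcg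
    · exact hkg
  -- f = g * u
  have hfeq : f = g * u := by
    funext x
    show f x = g (u x)
    rw [hgdef, gaux_u cE fE hu]
  rw [hfeq]
  exact Subsemigroup.mul_mem _
    (Subsemigroup.subset_closure (Set.mem_union_left _ hg))
    (Subsemigroup.subset_closure (Set.mem_union_right _ rfl))
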